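/- Let H be a finite dimensional Hopf algebra with distinguished grouplike α_H ∈ H*, λ a right integral with λ(Λ)=1 for a left cointegral Λ. Then the map c : H** ⊗ H → k_α ⊗ H ⊗ H given by e_x ⊗ y ↦ λ(S(y₍₁₎)x) α_H(y₍₂₎) ⊗ y₍₃₎ ⊗ y₍₄₎ is H-linear, where H** carries the double-dual H-action h·e_x = e_{S²(h)x}, k_α is k with H-action via α_H, and H ⊗ H carries the diagonal left regular action. -/

import Mathlib

open Coalgebra TensorProduct

open HopfAlgebra

section Helpers

variable {k H : Type*} [Field k] [Ring H] [HopfAlgebra k H]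

lemma my_sum_counit_smul {ι : Type*} (a : H) (ra : Repr k a ι) :
    ∑ i ∈ ra.index, counit (R := k) (ra.left i) • ra.right i = a := by
  have h := sum_counit_tmul_eq ra
  have h2 := congrArg (TensorProduct.lid k H) h
  simp only [map_sum, _root_.TensorProduct.lid_tmul] at h2
  simpa using h2

lemma my_sum_smul_counit {ι : Type*} (a : H) (ra : Repr k a ι) :
    ∑ i ∈ ra.index, counit (R := k) (ra.right i) • ra.left i = a := by
  have h := sum_tmul_counit_eq ra
  have h2 := congrArg (TensorProduct.rid k H) h
  simp only [map_sum, _root_.TensorProduct.rid_tmul] at h2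
  simpa using h2

lemma my_antipode_one : antipode (R := k) (1 : H) = 1 := by
  have := mul_antipode_rTensor_comul_apply (R := k) (A := H) 1
  simpa [Algebra.TensorProduct.one_def] using this

/-- product representation -/
def mulRepr {ι κ : Type*} {a b : H} (ra : Repr k a ι) (rb : Repr k b κ) :
    Repr k (a * b) (ι × κ) where
  index := ra.index ×ˢ rb.index
  left := fun p => ra.left p.1 * rb.left p.2
  right := fun p => ra.right p.1 * rb.right p.2
  eq := by
    rw [Finset.sum_product]
    simp only [← Algebra.TensorProduct.tmul_mul_tmul]
    rw [← Finset.sum_mul_sum]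
    rw [ra.eq, rb.eq, Bialgebra.comul_mul]

lemma sum_S_mul {ι κ : Type*} (a b : H) (ra : Repr k a ι) (rb : Repr k b κ) :
    ∑ i ∈ ra.index, ∑ j ∈ rb.index,
      antipode (R := k) (ra.left i * rb.left j) * (ra.right i * rb.right j) =
      (counit (R := k) a * counit (R := k) b) • (1 : H) := by
  have h := sum_antipode_mul_eq_algebraMap_counit (R := k) (mulRepr ra rb)
  simp only [mulRepr] at h
  rw [Finset.sum_product] at h
  rw [h, Bialgebra.counit_mul, Algebra.smul_def, mul_one]

lemma sum_mul_SS {ι κ : Type*} (a b : H) (ra : Repr k a ι) (rb : Repr k b κ) :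
    ∑ i ∈ ra.index, ∑ j ∈ rb.index,
      (ra.left i * rb.left j) *
        (antipode (R := k) (rb.right j) * antipode (R := k) (ra.right i)) =
      (counit (R := k) a * counit (R := k) b) • (1 : H) := by
  have inner : ∀ i ∈ ra.index, ∑ j ∈ rb.index,
      (ra.left i * rb.left j) *
        (antipode (R := k) (rb.right j) * antipode (R := k) (ra.right i)) =
      counit (R := k) b • (ra.left i * antipode (R := k) (ra.right i)) := by
    intro i _
    have hb := sum_mul_antipode_eq_algebraMap_counit (R := k) rb
    calc ∑ j ∈ rb.index, (ra.left i * rb.left j) *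
          (antipode (R := k) (rb.right j) * antipode (R := k) (ra.right i))
        = ra.left i * ((∑ j ∈ rb.index, rb.left j * antipode (R := k) (rb.right j)) *
            antipode (R := k) (ra.right i)) := by
          rw [Finset.sum_mul, Finset.mul_sum]
          apply Finset.sum_congr rfl; intro j _; simp [mul_assoc]
      _ = counit (R := k) b • (ra.left i * antipode (R := k) (ra.right i)) := by
          rw [hb, Algebra.smul_def, ← mul_assoc, ← Algebra.commutes, mul_assoc]
  rw [Finset.sum_congr rfl inner, ← Finset.smul_sum, sum_mul_antipode_eq_algebraMap_counit ra,
    Algebra.smul_def, Algebra.smul_def, ← map_mul, mul_comm (counit (R := k) b), mul_one]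

end Helpers

section AntipodeMul

variable {k H : Type*} [Field k] [Ring H] [HopfAlgebra k H]

/-- the 6-ary comparison map used in the proof of anti-multiplicativity. -/
noncomputable def PhiMap (k H : Type*) [Field k] [Ring H] [HopfAlgebra k H] :
    (H ⊗[k] (H ⊗[k] H)) ⊗[k] (H ⊗[k] (H ⊗[k] H)) →ₗ[k] H :=
  (LinearMap.mul' k H) ∘ₗ (LinearMap.lTensor H (LinearMap.mul' k H)) ∘ₗ
    TensorProduct.map (antipode (R := k) ∘ₗ LinearMap.mul' k H)
      (TensorProduct.map (LinearMap.mul' k H)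
        ((LinearMap.mul' k H) ∘ₗ
          TensorProduct.map (antipode (R := k)) (antipode (R := k)) ∘ₗ
          (TensorProduct.comm k H H).toLinearMap)) ∘ₗ
    (LinearMap.lTensor (H ⊗[k] H) (tensorTensorTensorComm k H H H H).toLinearMap) ∘ₗ
    (tensorTensorTensorComm k H (H ⊗[k] H) H (H ⊗[k] H)).toLinearMap

lemma PhiMap_tmul (u1 u2 u3 v1 v2 v3 : H) :
    PhiMap k H ((u1 ⊗ₜ (u2 ⊗ₜ u3)) ⊗ₜ (v1 ⊗ₜ (v2 ⊗ₜ v3))) =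
      antipode (R := k) (u1 * v1) *
        ((u2 * v2) * (antipode (R := k) v3 * antipode (R := k) u3)) := by
  simp [PhiMap]

theorem my_antipode_mul (a b : H) :
    antipode (R := k) (a * b) = antipode (R := k) b * antipode (R := k) a := by
  classical
  set ra := ℛ k a with hra
  set rb := ℛ k b with hrb
  have h3 := sum_tmul_tmul_eq ra (fun i => ℛ k (ra.left i)) (fun i => ℛ k (ra.right i))
  have h4 := sum_tmul_tmul_eq rb (fun i => ℛ k (rb.left i)) (fun i => ℛ k (rb.right i))
  have h1 : PhiMap k H
      ((∑ i ∈ ra.index, ∑ j ∈ (ℛ k (ra.right i)).index,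
          ra.left i ⊗ₜ[k] ((ℛ k (ra.right i)).left j ⊗ₜ[k] (ℛ k (ra.right i)).right j)) ⊗ₜ[k]
       (∑ i ∈ rb.index, ∑ j ∈ (ℛ k (rb.right i)).index,
          rb.left i ⊗ₜ[k] ((ℛ k (rb.right i)).left j ⊗ₜ[k] (ℛ k (rb.right i)).right j))) =
      antipode (R := k) (a * b) := by
    simp only [sum_tmul, tmul_sum, map_sum, PhiMap_tmul]
    calc ∑ j ∈ rb.index, ∑ j' ∈ (ℛ k (rb.right j)).index, ∑ i ∈ ra.index,
          ∑ i' ∈ (ℛ k (ra.right i)).index,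
          antipode (R := k) (ra.left i * rb.left j) *
            (((ℛ k (ra.right i)).left i' * (ℛ k (rb.right j)).left j') *
              (antipode (R := k) ((ℛ k (rb.right j)).right j') *
                antipode (R := k) ((ℛ k (ra.right i)).right i')))
        = ∑ j ∈ rb.index, ∑ i ∈ ra.index, ∑ i' ∈ (ℛ k (ra.right i)).index,
            ∑ j' ∈ (ℛ k (rb.right j)).index,
            antipode (R := k) (ra.left i * rb.left j) *
            (((ℛ k (ra.right i)).left i' * (ℛ k (rb.right j)).left j') *
              (antipode (R := k) ((ℛ k (rb.right j)).right j') *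
                antipode (R := k) ((ℛ k (ra.right i)).right i'))) := by
          apply Finset.sum_congr rfl; intro j _
          rw [Finset.sum_comm]
          apply Finset.sum_congr rfl; intro i _
          rw [Finset.sum_comm]
      _ = ∑ j ∈ rb.index, ∑ i ∈ ra.index,
            (counit (R := k) (ra.right i) * counit (R := k) (rb.right j)) •
              antipode (R := k) (ra.left i * rb.left j) := by
          apply Finset.sum_congr rfl; intro j hj
          apply Finset.sum_congr rfl; intro i hi
          simp only [← Finset.mul_sum]
          rw [sum_mul_SS _ _ (ℛ k (ra.right i)) (ℛ k (rb.right j)), mul_smul_comm, mul_one]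
      _ = antipode (R := k) (a * b) := by
          rw [Finset.sum_comm]
          conv_rhs => rw [← my_sum_smul_counit a ra, ← my_sum_smul_counit b rb,
            Finset.sum_mul_sum, map_sum]
          simp only [map_sum]
          apply Finset.sum_congr rfl; intro i _
          apply Finset.sum_congr rfl; intro j _
          rw [smul_mul_assoc, mul_smul_comm, map_smul, map_smul, smul_smul]
  have h2 : PhiMap k H
      ((∑ i ∈ ra.index, ∑ j ∈ (ℛ k (ra.left i)).index,
          (ℛ k (ra.left i)).left j ⊗ₜ[k] ((ℛ k (ra.left i)).right j ⊗ₜ[k] ra.right i)) ⊗ₜ[k]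
       (∑ i ∈ rb.index, ∑ j ∈ (ℛ k (rb.left i)).index,
          (ℛ k (rb.left i)).left j ⊗ₜ[k] ((ℛ k (rb.left i)).right j ⊗ₜ[k] rb.right i))) =
      antipode (R := k) b * antipode (R := k) a := by
    simp only [sum_tmul, tmul_sum, map_sum, PhiMap_tmul]
    calc ∑ j ∈ rb.index, ∑ j' ∈ (ℛ k (rb.left j)).index, ∑ i ∈ ra.index,
          ∑ i' ∈ (ℛ k (ra.left i)).index,
          antipode (R := k) ((ℛ k (ra.left i)).left i' * (ℛ k (rb.left j)).left j') *
            (((ℛ k (ra.left i)).right i' * (ℛ k (rb.left j)).right j') *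
              (antipode (R := k) (rb.right j) * antipode (R := k) (ra.right i)))
        = ∑ j ∈ rb.index, ∑ i ∈ ra.index, ∑ i' ∈ (ℛ k (ra.left i)).index,
            ∑ j' ∈ (ℛ k (rb.left j)).index,
            antipode (R := k) ((ℛ k (ra.left i)).left i' * (ℛ k (rb.left j)).left j') *
            (((ℛ k (ra.left i)).right i' * (ℛ k (rb.left j)).right j') *
              (antipode (R := k) (rb.right j) * antipode (R := k) (ra.right i))) := by
          apply Finset.sum_congr rfl; intro j _
          rw [Finset.sum_comm]
          apply Finset.sum_congr rfl; intro i _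
          rw [Finset.sum_comm]
      _ = ∑ j ∈ rb.index, ∑ i ∈ ra.index,
            (counit (R := k) (ra.left i) * counit (R := k) (rb.left j)) •
              (antipode (R := k) (rb.right j) * antipode (R := k) (ra.right i)) := by
          apply Finset.sum_congr rfl; intro j hj
          apply Finset.sum_congr rfl; intro i hi
          have assocstep : ∀ (i' : (ℛ k (ra.left i)).ι) (j' : (ℛ k (rb.left j)).ι),
              antipode (R := k) ((ℛ k (ra.left i)).left i' * (ℛ k (rb.left j)).left j') *
                (((ℛ k (ra.left i)).right i' * (ℛ k (rb.left j)).right j') *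
                  (antipode (R := k) (rb.right j) * antipode (R := k) (ra.right i))) =
              (antipode (R := k) ((ℛ k (ra.left i)).left i' * (ℛ k (rb.left j)).left j') *
                ((ℛ k (ra.left i)).right i' * (ℛ k (rb.left j)).right j')) *
                  (antipode (R := k) (rb.right j) * antipode (R := k) (ra.right i)) := by
            intros; simp only [mul_assoc]
          simp only [assocstep, ← Finset.sum_mul]
          rw [sum_S_mul _ _ (ℛ k (ra.left i)) (ℛ k (rb.left j)), smul_mul_assoc, one_mul]
      _ = antipode (R := k) b * antipode (R := k) a := by
          have hS : ∀ (cH : H) (rc : Coalgebra.Repr k cH (H × H)),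
              ∑ i ∈ rc.index, counit (R := k) (rc.left i) • antipode (R := k) (rc.right i) =
                antipode (R := k) cH := by
            intro cH rc
            have hcg := congrArg (antipode (R := k)) (my_sum_counit_smul cH rc)
            simpa [map_sum] using hcg
          calc ∑ j ∈ rb.index, ∑ i ∈ ra.index,
                (counit (R := k) (ra.left i) * counit (R := k) (rb.left j)) •
                  (antipode (R := k) (rb.right j) * antipode (R := k) (ra.right i))
              = ∑ j ∈ rb.index, ∑ i ∈ ra.index,
                  (counit (R := k) (rb.left j) • antipode (R := k) (rb.right j)) *
                    (counit (R := k) (ra.left i) • antipode (R := k) (ra.right i)) := by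
                apply Finset.sum_congr rfl; intro j _
                apply Finset.sum_congr rfl; intro i _
                rw [smul_mul_assoc, mul_smul_comm, smul_smul, mul_comm (counit (R := k) (rb.left j))]
            _ = (∑ j ∈ rb.index, counit (R := k) (rb.left j) • antipode (R := k) (rb.right j)) *
                  (∑ i ∈ ra.index, counit (R := k) (ra.left i) • antipode (R := k) (ra.right i)) := by
                rw [Finset.sum_mul_sum]
            _ = antipode (R := k) b * antipode (R := k) a := by rw [hS a ra, hS b rb]
  rw [← h1, ← h3, ← h4]
  exact h2

end AntipodeMul

section MainAux

variable {k H : Type*} [Field k] [Ring H] [HopfAlgebra k H]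

lemma exists_repr4 [FiniteDimensional k H] (T : H ⊗[k] (H ⊗[k] (H ⊗[k] H))) :
    ∃ (ι : Type) (s : Finset ι) (y1 y2 y3 y4 : ι → H),
      T = ∑ i ∈ s, y1 i ⊗ₜ[k] (y2 i ⊗ₜ[k] (y3 i ⊗ₜ[k] y4 i)) := by
  classical
  let b := Module.finBasis k H
  let B := b.tensorProduct (b.tensorProduct (b.tensorProduct b))
  refine ⟨_, Finset.univ,
    fun i => B.repr T i • b i.1, fun i => b i.2.1, fun i => b i.2.2.1, fun i => b i.2.2.2, ?_⟩
  conv_lhs => rw [← B.sum_repr T]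
  refine Finset.sum_congr rfl fun i _ => ?_
  obtain ⟨i1, i2, i3, i4⟩ := i
  simp only [B, Module.Basis.tensorProduct_apply, smul_tmul']

lemma algMap_eq_lTensor (A : Type*) {B C : Type*} [Ring A] [Algebra k A] [Ring B] [Algebra k B]
    [Ring C] [Algebra k C] (f : B →ₐ[k] C) :
    (Algebra.TensorProduct.map (AlgHom.id k A) f).toLinearMap = LinearMap.lTensor A f.toLinearMap :=
  TensorProduct.ext' fun a b => by simp

/-- The four-fold comultiplication as an algebra hom. -/
noncomputable def D2AH (k H : Type*) [Field k] [Ring H] [HopfAlgebra k H] :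
    H →ₐ[k] H ⊗[k] (H ⊗[k] H) :=
  (Algebra.TensorProduct.map (AlgHom.id k H) (Bialgebra.comulAlgHom k H)).comp
    (Bialgebra.comulAlgHom k H)

noncomputable def D3AH (k H : Type*) [Field k] [Ring H] [HopfAlgebra k H] :
    H →ₐ[k] H ⊗[k] (H ⊗[k] (H ⊗[k] H)) :=
  (Algebra.TensorProduct.map (AlgHom.id k H) (D2AH k H)).comp (Bialgebra.comulAlgHom k H)

lemma D2AH_toLin : (D2AH k H).toLinearMap =
    (LinearMap.lTensor H (comul (R := k))) ∘ₗ (comul (R := k) (A := H)) := by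
  apply LinearMap.ext; intro v
  show (Algebra.TensorProduct.map (AlgHom.id k H) (Bialgebra.comulAlgHom k H)).toLinearMap
      (comul (R := k) v) = _
  rw [algMap_eq_lTensor]
  rfl

lemma D3AH_apply (y : H) : D3AH k H y =
    (LinearMap.lTensor H (LinearMap.lTensor H (comul (R := k))))
      ((LinearMap.lTensor H (comul (R := k))) (comul (R := k) y)) := by
  have h1 : D3AH k H y =
      (Algebra.TensorProduct.map (AlgHom.id k H) (D2AH k H)).toLinearMap (comul (R := k) y) := rfl
  rw [h1, algMap_eq_lTensor, D2AH_toLin, LinearMap.lTensor_comp]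
  rfl

/-- The scalar-collapsing map used for each term of the expansion of `c (x ⊗ y)`. -/
noncomputable def PsiMap (k H : Type*) [Field k] [Ring H] [HopfAlgebra k H]
    (lam αH : H →ₗ[k] k) (x c1 c2 c3 c4 : H) :
    H ⊗[k] (H ⊗[k] (H ⊗[k] H)) →ₗ[k] H ⊗[k] H :=
  (TensorProduct.lid k (H ⊗[k] H)).toLinearMap ∘ₗ
  (LinearMap.lTensor k (TensorProduct.lid k (H ⊗[k] H)).toLinearMap) ∘ₗ
  TensorProduct.map
    (lam ∘ₗ LinearMap.mulLeft k (HopfAlgebra.antipode (R := k) c1) ∘ₗ LinearMap.mulRight k x)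
    (TensorProduct.map (αH ∘ₗ LinearMap.mulRight k c2)
      (TensorProduct.map (LinearMap.mulRight k c3) (LinearMap.mulRight k c4)))

lemma PsiMap_tmul (lam αH : H →ₗ[k] k) (x c1 c2 c3 c4 g a b d : H) :
    PsiMap k H lam αH x c1 c2 c3 c4 (g ⊗ₜ (a ⊗ₜ (b ⊗ₜ d))) =
      (lam (HopfAlgebra.antipode (R := k) c1 * (g * x)) * αH (a * c2)) •
        ((b * c3) ⊗ₜ[k] (d * c4)) := by
  simp [PsiMap, smul_smul, mul_comm]

/-- The map collapsing the first two legs. -/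
noncomputable def OmegaMap (k H : Type*) [Field k] [Ring H] [HopfAlgebra k H] :
    H ⊗[k] (H ⊗[k] H) →ₗ[k] H ⊗[k] (H ⊗[k] (H ⊗[k] H)) :=
  TensorProduct.map
    (LinearMap.mul' k H ∘ₗ
      TensorProduct.map (HopfAlgebra.antipode (R := k))
        (HopfAlgebra.antipode (R := k) ∘ₗ HopfAlgebra.antipode (R := k)) ∘ₗ
      (TensorProduct.comm k H H).toLinearMap)
    ((LinearMap.lTensor H (comul (R := k))) ∘ₗ (comul (R := k) (A := H))) ∘ₗ
  (TensorProduct.assoc k H H H).symm.toLinearMap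

lemma OmegaMap_tmul (α β γ : H) :
    OmegaMap k H (α ⊗ₜ (β ⊗ₜ γ)) =
      (HopfAlgebra.antipode (R := k) β *
          HopfAlgebra.antipode (R := k) (HopfAlgebra.antipode (R := k) α)) ⊗ₜ[k]
        ((LinearMap.lTensor H (comul (R := k))) (comul (R := k) γ)) := by
  simp [OmegaMap]

lemma tensor4_sum_mul_sum {ι κ : Type*} (s : Finset ι) (t : Finset κ)
    (f : ι → H ⊗[k] (H ⊗[k] (H ⊗[k] H))) (g : κ → H ⊗[k] (H ⊗[k] (H ⊗[k] H))) :
    (∑ i ∈ s, f i) * (∑ j ∈ t, g j) = ∑ i ∈ s, ∑ j ∈ t, f i * g j :=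
  by exact Finset.sum_mul_sum s t f g

end MainAux

/-- Let `H` be a finite dimensional Hopf algebra with distinguished
grouplike `αH ∈ H*`, `λ` a right integral with `λ(Λ) = 1` for a left cointegral `Λ`.
Then the map `c : H** ⊗ H → k_α ⊗ H ⊗ H`, `e_x ⊗ y ↦ λ(S(y₍₁₎)x) αH(y₍₂₎) ⊗ y₍₃₎ ⊗ y₍₄₎`
is `H`-linear, where `H**` carries the double-dual action `h·e_x = e_{S²(h₍₁₎)x}`
(so concretely `h·(e_x ⊗ y) = e_{S²(h₍₁₎)x} ⊗ h₍₂₎ y`), `k_α` is `k` with action via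
`αH`, and `H ⊗ H` carries the diagonal left regular action.  Identifying `H** ≅ H` via
`x ↦ e_x` and absorbing the `k_α` component as a scalar, `c` is modeled as a linear map
`H ⊗ H → H ⊗ H`. -/
theorem left_chromatic_map_H_linear
    {k H : Type*} [Field k] [Ring H] [HopfAlgebra k H] [FiniteDimensional k H]
    (Λ : H) (hΛ0 : Λ ≠ 0)
    (hΛ : ∀ h : H, h * Λ = counit (R := k) h • Λ)
    (lam : H →ₗ[k] k)
    (hlam : ∀ h : H,
      (TensorProduct.lid k H) ((lam.rTensor H) (comul (R := k) h)) = lam h • (1 : H))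
    (hnorm : lam Λ = 1)
    (αH : H →ₗ[k] k)
    (hαH : ∀ L : H, (∀ h : H, h * L = counit (R := k) h • L) →
        ∀ h : H, L * HopfAlgebra.antipode (R := k) h = αH h • L)
    (c : H ⊗[k] H →ₗ[k] H ⊗[k] H)
    (hc : ∀ (x y : H) (ι : Type) (s : Finset ι) (y1 y2 y3 y4 : ι → H),
      (LinearMap.lTensor H (LinearMap.lTensor H (comul (R := k))))
          ((LinearMap.lTensor H (comul (R := k))) (comul (R := k) y)) =
        ∑ i ∈ s, y1 i ⊗ₜ[k] (y2 i ⊗ₜ[k] (y3 i ⊗ₜ[k] y4 i)) →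
      c (x ⊗ₜ[k] y) =
        ∑ i ∈ s, (lam (HopfAlgebra.antipode (R := k) (y1 i) * x) * αH (y2 i)) •
          (y3 i ⊗ₜ[k] y4 i)) :
    ∀ (h x y : H) (κ μ : Type) (t : Finset κ) (r : Finset μ)
      (p q : κ → H) (u v w : μ → H),
      comul (R := k) h = ∑ j ∈ t, p j ⊗ₜ[k] q j →
      (LinearMap.lTensor H (comul (R := k))) (comul (R := k) h) =
        ∑ l ∈ r, u l ⊗ₜ[k] (v l ⊗ₜ[k] w l) →
      c (∑ j ∈ t,
          (HopfAlgebra.antipode (R := k) (HopfAlgebra.antipode (R := k) (p j)) * x)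
            ⊗ₜ[k] (q j * y)) =
      ∑ l ∈ r, αH (u l) •
        TensorProduct.map (LinearMap.mulLeft k (v l)) (LinearMap.mulLeft k (w l))
          (c (x ⊗ₜ[k] y)) := by
  classical
  intro h x y κ μ t r p q u v w hpq huvw
  -- αH is multiplicative
  have hΛS : ∀ g : H, Λ * antipode (R := k) g = αH g • Λ := hαH Λ hΛ
  have hαmul : ∀ a b : H, αH (a * b) = αH a * αH b := by
    intro a b
    have e1 : Λ * antipode (R := k) (a * b) = αH (a * b) • Λ := hΛS _
    rw [my_antipode_mul, ← mul_assoc, hΛS b, smul_mul_assoc, hΛS a, smul_smul] at e1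
    have e2 := smul_left_injective k hΛ0 e1
    rw [← e2]; exact mul_comm _ _
  -- canonical expansion of the four-fold comultiplication of y
  obtain ⟨ιy, sy, y1, y2, y3, y4, hy⟩ :=
    exists_repr4 (k := k) ((LinearMap.lTensor H (LinearMap.lTensor H (comul (R := k))))
      ((LinearMap.lTensor H (comul (R := k))) (comul (R := k) y)))
  have hz : c (x ⊗ₜ[k] y) =
      ∑ m ∈ sy, (lam (antipode (R := k) (y1 m) * x) * αH (y2 m)) • (y3 m ⊗ₜ[k] y4 m) :=
    hc x y ιy sy y1 y2 y3 y4 hy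
  set rh := ℛ k h with hrh
  -- expansions of the four-fold comultiplications of the right legs of h
  have hQex : ∀ i : rh.ι, ∃ (ι' : Type) (s' : Finset ι') (Q1 Q2 Q3 Q4 : ι' → H),
      (LinearMap.lTensor H (LinearMap.lTensor H (comul (R := k))))
        ((LinearMap.lTensor H (comul (R := k))) (comul (R := k) (rh.right i))) =
      ∑ n ∈ s', Q1 n ⊗ₜ[k] (Q2 n ⊗ₜ[k] (Q3 n ⊗ₜ[k] Q4 n)) := fun i => exists_repr4 _
  choose ιQ sQ Q1 Q2 Q3 Q4 hQ using hQex
  -- rewrite the right-hand side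
  have eR : ∑ l ∈ r, αH (u l) •
      TensorProduct.map (LinearMap.mulLeft k (v l)) (LinearMap.mulLeft k (w l))
        (c (x ⊗ₜ[k] y)) =
      ∑ m ∈ sy, ∑ l ∈ r,
        (lam (antipode (R := k) (y1 m) * x) * αH (y2 m) * αH (u l)) •
          ((v l * y3 m) ⊗ₜ[k] (w l * y4 m)) := by
    rw [hz]
    simp only [map_sum, map_smul, TensorProduct.map_tmul, LinearMap.mulLeft_apply,
      Finset.smul_sum, smul_smul]
    rw [Finset.sum_comm]
    apply Finset.sum_congr rfl; intro m _
    apply Finset.sum_congr rfl; intro l _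
    congr 1
    ring
  rw [eR]
  -- rewrite the left-hand side argument
  have eL1 : (∑ j ∈ t, (antipode (R := k) (antipode (R := k) (p j)) * x) ⊗ₜ[k] (q j * y)) =
      TensorProduct.map
        (LinearMap.mulRight k x ∘ₗ antipode (R := k) ∘ₗ antipode (R := k))
        (LinearMap.mulRight k y) (comul (R := k) h) := by
    rw [hpq]; simp [map_sum]
  have eL2 : TensorProduct.map
        (LinearMap.mulRight k x ∘ₗ antipode (R := k) ∘ₗ antipode (R := k))
        (LinearMap.mulRight k y) (comul (R := k) h) =
      ∑ i ∈ rh.index,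
        (antipode (R := k) (antipode (R := k) (rh.left i)) * x) ⊗ₜ[k] (rh.right i * y) := by
    rw [← rh.eq]; simp [map_sum]
  -- per-leg expansion of the comultiplication of products
  have hprod : ∀ i : rh.ι,
      (LinearMap.lTensor H (LinearMap.lTensor H (comul (R := k))))
        ((LinearMap.lTensor H (comul (R := k))) (comul (R := k) (rh.right i * y))) =
      ∑ nm ∈ sQ i ×ˢ sy,
        (Q1 i nm.1 * y1 nm.2) ⊗ₜ[k] ((Q2 i nm.1 * y2 nm.2) ⊗ₜ[k]
          ((Q3 i nm.1 * y3 nm.2) ⊗ₜ[k] (Q4 i nm.1 * y4 nm.2))) := by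
    intro i
    rw [← D3AH_apply, map_mul, D3AH_apply, D3AH_apply, hQ i, hy, Finset.sum_product,
      tensor4_sum_mul_sum]
    apply Finset.sum_congr rfl; intro n _
    apply Finset.sum_congr rfl; intro m _
    simp [Algebra.TensorProduct.tmul_mul_tmul]
  have hci : ∀ i : rh.ι,
      c ((antipode (R := k) (antipode (R := k) (rh.left i)) * x) ⊗ₜ[k] (rh.right i * y)) =
      ∑ n ∈ sQ i, ∑ m ∈ sy, PsiMap k H lam αH x (y1 m) (y2 m) (y3 m) (y4 m)
        ((antipode (R := k) (Q1 i n) * antipode (R := k) (antipode (R := k) (rh.left i)))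
          ⊗ₜ[k] (Q2 i n ⊗ₜ[k] (Q3 i n ⊗ₜ[k] Q4 i n))) := by
    intro i
    rw [hc _ _ _ _ _ _ _ _ (hprod i), Finset.sum_product]
    apply Finset.sum_congr rfl; intro n _
    apply Finset.sum_congr rfl; intro m _
    rw [PsiMap_tmul]
    simp only [my_antipode_mul, mul_assoc]
  -- Claim B : the collapse of the first two legs
  have hW : (∑ i ∈ rh.index, ∑ n ∈ sQ i,
      (antipode (R := k) (Q1 i n) * antipode (R := k) (antipode (R := k) (rh.left i)))
        ⊗ₜ[k] (Q2 i n ⊗ₜ[k] (Q3 i n ⊗ₜ[k] Q4 i n))) =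
      (1 : H) ⊗ₜ[k] ((LinearMap.lTensor H (comul (R := k))) (comul (R := k) h)) := by
    have st1 : ∀ i : rh.ι, ∑ n ∈ sQ i,
        (antipode (R := k) (Q1 i n) * antipode (R := k) (antipode (R := k) (rh.left i)))
          ⊗ₜ[k] (Q2 i n ⊗ₜ[k] (Q3 i n ⊗ₜ[k] Q4 i n)) =
        ∑ i' ∈ (ℛ k (rh.right i)).index, OmegaMap k H
          (rh.left i ⊗ₜ[k]
            ((ℛ k (rh.right i)).left i' ⊗ₜ[k] (ℛ k (rh.right i)).right i')) := by
      intro i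
      have l1 : ∑ n ∈ sQ i,
          (antipode (R := k) (Q1 i n) * antipode (R := k) (antipode (R := k) (rh.left i)))
            ⊗ₜ[k] (Q2 i n ⊗ₜ[k] (Q3 i n ⊗ₜ[k] Q4 i n)) =
          (LinearMap.rTensor (H ⊗[k] (H ⊗[k] H))
            (LinearMap.mulRight k (antipode (R := k) (antipode (R := k) (rh.left i))) ∘ₗ
              antipode (R := k)))
            ((LinearMap.lTensor H (LinearMap.lTensor H (comul (R := k))))
              ((LinearMap.lTensor H (comul (R := k))) (comul (R := k) (rh.right i)))) := by
        rw [hQ i]; simp [map_sum]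
      have l2 : (LinearMap.lTensor H (LinearMap.lTensor H (comul (R := k))))
            ((LinearMap.lTensor H (comul (R := k))) (comul (R := k) (rh.right i))) =
          (LinearMap.lTensor H ((LinearMap.lTensor H (comul (R := k))) ∘ₗ comul (R := k)))
            (comul (R := k) (rh.right i)) := by
        rw [LinearMap.lTensor_comp]; rfl
      rw [l1, l2, ← (ℛ k (rh.right i)).eq]
      simp [map_sum, OmegaMap_tmul]
    rw [Finset.sum_congr rfl (fun i _ => st1 i)]
    simp only [← map_sum]
    rw [← sum_tmul_tmul_eq rh (fun i => ℛ k (rh.left i)) (fun i => ℛ k (rh.right i))]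
    simp only [map_sum, OmegaMap_tmul]
    have st2 : ∀ i : rh.ι, ∑ j ∈ (ℛ k (rh.left i)).index,
        antipode (R := k) ((ℛ k (rh.left i)).right j) *
          antipode (R := k) (antipode (R := k) ((ℛ k (rh.left i)).left j)) =
        counit (R := k) (rh.left i) • (1 : H) := by
      intro i
      have h5 := congrArg (antipode (R := k)) (sum_antipode_mul_eq_algebraMap_counit (R := k) (ℛ k (rh.left i)))
      simp only [map_sum, my_antipode_mul, Algebra.algebraMap_eq_smul_one, map_smul,
        my_antipode_one] at h5
      exact h5
    simp only [← sum_tmul]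
    rw [Finset.sum_congr rfl (fun i _ => by rw [st2 i])]
    simp only [smul_tmul, ← tmul_sum]
    congr 1
    have h6 := congrArg (fun a : H => (LinearMap.lTensor H (comul (R := k))) (comul (R := k) a))
      (my_sum_counit_smul h rh)
    simp only [map_sum, map_smul] at h6
    exact h6
  -- final computation
  calc c (∑ j ∈ t,
        (antipode (R := k) (antipode (R := k) (p j)) * x) ⊗ₜ[k] (q j * y))
      = ∑ i ∈ rh.index,
          c ((antipode (R := k) (antipode (R := k) (rh.left i)) * x) ⊗ₜ[k] (rh.right i * y)) := by
        rw [eL1, eL2, map_sum]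
    _ = ∑ i ∈ rh.index, ∑ n ∈ sQ i, ∑ m ∈ sy,
          PsiMap k H lam αH x (y1 m) (y2 m) (y3 m) (y4 m)
          ((antipode (R := k) (Q1 i n) * antipode (R := k) (antipode (R := k) (rh.left i)))
            ⊗ₜ[k] (Q2 i n ⊗ₜ[k] (Q3 i n ⊗ₜ[k] Q4 i n))) := by
        exact Finset.sum_congr rfl (fun i _ => hci i)
    _ = ∑ m ∈ sy, ∑ i ∈ rh.index, ∑ n ∈ sQ i,
          PsiMap k H lam αH x (y1 m) (y2 m) (y3 m) (y4 m)
          ((antipode (R := k) (Q1 i n) * antipode (R := k) (antipode (R := k) (rh.left i)))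
            ⊗ₜ[k] (Q2 i n ⊗ₜ[k] (Q3 i n ⊗ₜ[k] Q4 i n))) := by
        rw [Finset.sum_congr rfl (fun i _ => Finset.sum_comm)]
        exact Finset.sum_comm
    _ = ∑ m ∈ sy, PsiMap k H lam αH x (y1 m) (y2 m) (y3 m) (y4 m)
          ((1 : H) ⊗ₜ[k] ((LinearMap.lTensor H (comul (R := k))) (comul (R := k) h))) := by
        apply Finset.sum_congr rfl; intro m _
        rw [← hW]
        simp only [map_sum]
    _ = ∑ m ∈ sy, ∑ l ∈ r,
          (lam (antipode (R := k) (y1 m) * x) * αH (y2 m) * αH (u l)) •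
            ((v l * y3 m) ⊗ₜ[k] (w l * y4 m)) := by
        rw [huvw]
        apply Finset.sum_congr rfl; intro m _
        simp only [tmul_sum, map_sum, PsiMap_tmul]
        apply Finset.sum_congr rfl; intro l _
        rw [one_mul, hαmul]
        congr 1
        ring
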